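/- In a contraction hierarchy H, if u and w are both neighbors in H of a vertex v with rank(v) < rank(u) < rank(w), then (u, w) is an edge of H. -/
import Mathlib


/-- In a contraction hierarchy `H`, if `u` and `w` are both
`H`-neighbors of a vertex `v` with `rank v < rank u < rank w`, then `(u, w)` is an
edge of `H`. -/
theorem stmt6 {V : Type*} (G H : SimpleGraph V) (rank : V → ℕ)
    (hrank : Function.Injective rank)
    -- characterization of the contraction hierarchy `H` built from `G` by rank
    (hH : ∀ a b : V, rank a < rank b →
      (H.Adj a b ↔ ∃ p : G.Walk a b, ∀ x ∈ p.support, x ≠ a → x ≠ b → rank x < rank a))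
    (v u w : V) (h1 : H.Adj v u) (h2 : H.Adj v w)
    (hvu : rank v < rank u) (huw : rank u < rank w) :
    H.Adj u w := by
  obtain ⟨p, hp⟩ := (hH v u hvu).mp h1
  obtain ⟨q, hq⟩ := (hH v w (hvu.trans huw)).mp h2
  refine (hH u w huw).mpr ⟨p.reverse.append q, ?_⟩
  intro x hx hxu hxw
  rw [SimpleGraph.Walk.mem_support_append_iff, SimpleGraph.Walk.support_reverse,
    List.mem_reverse] at hx
  by_cases hxv : x = v
  · subst hxv; exact hvu
  · rcases hx with hx | hx
    · exact (hp x hx hxv hxu).trans hvu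
    · exact (hq x hx hxv hxw).trans hvu
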